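/- Let I : (0,∞) → (0,∞) be the isoperimetric profile of a Riemannian 3-manifold in which: (i) for every V > 0 an isoperimetric region Ω_V with smooth boundary of constant mean curvature exists, and (ii) for every V₀ the one-parameter family obtained by flowing ∂Ω_{V₀} at unit normal speed provides a smooth comparison function I_{V₀} with I_{V₀} ≥ I, I_{V₀}(V₀) = I(V₀), and I_{V₀}''(V) I_{V₀}(V)² ≤ −∫_{Σ(V)} (Ric(n,n) + |A|²). If in addition Ric ≥ 0, then I is concave. -/

import Mathlib

open Set

set_option maxHeartbeats 1000000 in
/-- Key barrier lemma: a continuous function on `[x,y]` admitting, at every interior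
point, a smooth upper barrier touching it there with nonpositive second derivative,
lies above the chord. -/
lemma chord_le_of_barriers (f : ℝ → ℝ) {x y : ℝ} (hxy : x < y)
    (hf : ContinuousOn f (Icc x y))
    (hbar : ∀ x₀ ∈ Ioo x y, ∃ ε : ℝ, 0 < ε ∧ ∃ J : ℝ → ℝ,
      ContDiffOn ℝ 2 J (Ioo (x₀ - ε) (x₀ + ε)) ∧ J x₀ = f x₀ ∧
      (∀ V ∈ Ioo (x₀ - ε) (x₀ + ε), f V ≤ J V) ∧
      (∀ V ∈ Ioo (x₀ - ε) (x₀ + ε), deriv (deriv J) V ≤ 0)) :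
    ∀ z ∈ Icc x y, f x + (f y - f x) / (y - x) * (z - x) ≤ f z := by
  by_contra hcon
  push_neg at hcon
  obtain ⟨z₀, hz₀, hz₀lt⟩ := hcon
  have hyx : y - x ≠ 0 := sub_ne_zero.2 hxy.ne'
  set m : ℝ := (f y - f x) / (y - x) with hm
  clear_value m
  have hmyx : m * (y - x) = f y - f x := by rw [hm]; field_simp
  have hz₀x : x < z₀ := by
    rcases lt_or_eq_of_le hz₀.1 with h | h
    · exact h
    · exfalso
      rw [← h] at hz₀lt
      have : m * (x - x) = 0 := by ring
      linarith
  have hz₀y : z₀ < y := by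
    rcases lt_or_eq_of_le hz₀.2 with h | h
    · exact h
    · exfalso; rw [h] at hz₀lt; linarith
  set c : ℝ := f x + m * (z₀ - x) - f z₀ with hc
  clear_value c
  have hcpos : 0 < c := by rw [hc]; linarith
  have hq : 0 < (z₀ - x) * (y - z₀) := mul_pos (by linarith) (by linarith)
  set δ : ℝ := c / (2 * ((z₀ - x) * (y - z₀))) with hδ
  clear_value δ
  have hδpos : 0 < δ := by rw [hδ]; positivity
  have hδq : δ * ((z₀ - x) * (y - z₀)) = c / 2 := by
    rw [hδ, div_mul_eq_mul_div, div_eq_div_iff (mul_pos two_pos hq).ne' (by norm_num)]; ring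
  set g : ℝ → ℝ := fun u => f u + (-(f x + m * (u - x)) + δ * ((u - x) * (y - u))) with hg
  clear_value g
  have hgcont : ContinuousOn g (Icc x y) := by
    rw [hg]; exact hf.add (by fun_prop)
  obtain ⟨x₀, hx₀mem, hx₀min⟩ :=
    isCompact_Icc.exists_isMinOn (nonempty_Icc.2 hxy.le) hgcont
  have hgz₀ : g z₀ = -c / 2 := by
    rw [hg]; dsimp only; rw [show (z₀ - x) * (y - z₀) = (z₀ - x) * (y - z₀) from rfl]
    have : δ * ((z₀ - x) * (y - z₀)) = c / 2 := hδq
    rw [hc] at *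
    linarith
  have hgx₀neg : g x₀ < 0 := by
    have hstep : g x₀ ≤ g z₀ := hx₀min ⟨hz₀x.le, hz₀y.le⟩
    rw [hgz₀] at hstep
    linarith
  have hgx : g x = 0 := by rw [hg]; dsimp only; ring
  have hgy : g y = 0 := by rw [hg]; dsimp only; nlinarith [hmyx]
  have hx₀x : x < x₀ := by
    rcases lt_or_eq_of_le hx₀mem.1 with h | h
    · exact h
    · exfalso; rw [← h, hgx] at hgx₀neg; exact absurd hgx₀neg (lt_irrefl _)
  have hx₀y : x₀ < y := by
    rcases lt_or_eq_of_le hx₀mem.2 with h | h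
    · exact h
    · exfalso; rw [h, hgy] at hgx₀neg; exact absurd hgx₀neg (lt_irrefl _)
  obtain ⟨ε, hεpos, J, hJ, hJeq, hJge, hJ''⟩ := hbar x₀ ⟨hx₀x, hx₀y⟩
  set O : Set ℝ := Ioo (x₀ - ε) (x₀ + ε) with hO
  have hx₀O : x₀ ∈ O := ⟨by linarith, by linarith⟩
  have hOopen : IsOpen O := isOpen_Ioo
  set φ : ℝ → ℝ := fun u => J u + (-(f x + m * (u - x)) + δ * ((u - x) * (y - u))) with hφ
  -- the polynomial part and its derivatives
  have hp : ∀ u : ℝ, HasDerivAt (fun v => -(f x + m * (v - x)) + δ * ((v - x) * (y - v)))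
      (-(m * 1) + δ * (1 * (y - u) + (u - x) * (-1))) u := by
    intro u
    have h1 : HasDerivAt (fun v : ℝ => v - x) 1 u := (hasDerivAt_id u).sub_const x
    have h2 : HasDerivAt (fun v : ℝ => y - v) (-1) u := by
      simpa using (hasDerivAt_id u).const_sub y
    exact ((((h1.const_mul m).const_add (f x)).neg).add ((h1.mul h2).const_mul δ))
  have hJdiff : DifferentiableOn ℝ J O := hJ.differentiableOn (by norm_num)
  have hJ'diff : DifferentiableOn ℝ (deriv J) O :=
    (hJ.deriv_of_isOpen (m := 1) hOopen (by norm_num)).differentiableOn one_ne_zero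
  have hderivφ : EqOn (deriv φ) (fun u => deriv J u +
      (-(m * 1) + δ * (1 * (y - u) + (u - x) * (-1)))) O := by
    intro u hu
    have hJat : DifferentiableAt ℝ J u := (hJdiff u hu).differentiableAt (hOopen.mem_nhds hu)
    exact (hJat.hasDerivAt.add (hp u)).deriv
  have hφ'' : ∀ u ∈ O, deriv (deriv φ) u ≤ -(2 * δ) := by
    intro u hu
    have heq : deriv φ =ᶠ[nhds u] fun v => deriv J v +
        (-(m * 1) + δ * (1 * (y - v) + (v - x) * (-1))) :=
      Filter.eventuallyEq_of_mem (hOopen.mem_nhds hu) hderivφ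
    have hJ'at : DifferentiableAt ℝ (deriv J) u :=
      (hJ'diff u hu).differentiableAt (hOopen.mem_nhds hu)
    have hpd' : HasDerivAt (fun v : ℝ => -(m * 1) + δ * (1 * (y - v) + (v - x) * (-1)))
        (δ * (1 * (-1) + 1 * (-1))) u := by
      have h1 : HasDerivAt (fun v : ℝ => v - x) 1 u := (hasDerivAt_id u).sub_const x
      have h2 : HasDerivAt (fun v : ℝ => y - v) (-1) u := by
        simpa using (hasDerivAt_id u).const_sub y
      exact (((h2.const_mul 1).add (h1.mul_const (-1))).const_mul δ).const_add (-(m*1))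
    have hval : deriv (deriv φ) u = deriv (deriv J) u + δ * (1 * (-1) + 1 * (-1)) := by
      rw [heq.deriv_eq]
      exact (hJ'at.hasDerivAt.add hpd').deriv
    rw [hval]
    have := hJ'' u hu
    nlinarith
  have hstrict : StrictConcaveOn ℝ O φ := by
    apply strictConcaveOn_of_deriv2_neg (convex_Ioo _ _)
    · rw [hφ]; exact (hJ.continuousOn).add (by fun_prop)
    · intro u hu
      rw [interior_Ioo] at hu
      have h2 := hφ'' u hu
      show deriv (deriv φ) u < 0
      linarith
  -- two nearby points at which φ is at least φ x₀
  set r : ℝ := min (ε / 2) (min ((x₀ - x) / 2) ((y - x₀) / 2)) with hr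
  have hrpos : 0 < r := by
    apply lt_min (by linarith)
    exact lt_min (by linarith) (by linarith)
  have hrε : r < ε := lt_of_le_of_lt (min_le_left _ _) (by linarith)
  have hrx : r ≤ (x₀ - x) / 2 := le_trans (min_le_right _ _) (min_le_left _ _)
  have hry : r ≤ (y - x₀) / 2 := le_trans (min_le_right _ _) (min_le_right _ _)
  clear_value r
  have hu₁O : x₀ - r ∈ O := ⟨by linarith, by linarith⟩
  have hu₂O : x₀ + r ∈ O := ⟨by linarith, by linarith⟩
  have hu₁I : x₀ - r ∈ Icc x y := ⟨by linarith, by linarith⟩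
  have hu₂I : x₀ + r ∈ Icc x y := ⟨by linarith, by linarith⟩
  have hφx₀ : φ x₀ = g x₀ := by rw [hφ, hg]; dsimp only; rw [hJeq]
  have h₁ : φ x₀ ≤ φ (x₀ - r) := by
    rw [hφx₀]
    calc g x₀ ≤ g (x₀ - r) := hx₀min hu₁I
    _ ≤ φ (x₀ - r) := by
        rw [hg, hφ]; dsimp only
        have := hJge _ hu₁O
        linarith
  have h₂ : φ x₀ ≤ φ (x₀ + r) := by
    rw [hφx₀]
    calc g x₀ ≤ g (x₀ + r) := hx₀min hu₂I
    _ ≤ φ (x₀ + r) := by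
        rw [hg, hφ]; dsimp only
        have := hJge _ hu₂O
        linarith
  have hne : x₀ - r ≠ x₀ + r := by intro h; linarith [congrArg id h]
  have hkey := hstrict.2 hu₁O hu₂O hne (by norm_num : (0:ℝ) < 1/2) (by norm_num : (0:ℝ) < 1/2)
    (by norm_num)
  rw [show (1/2 : ℝ) • (x₀ - r) + (1/2 : ℝ) • (x₀ + r) = x₀ by
    simp only [smul_eq_mul]; ring] at hkey
  simp only [smul_eq_mul] at hkey
  clear_value φ
  linarith

/-- the isoperimetric profile `I` of a 3-manifold with `Ric ≥ 0` is
concave.  For each `V₀ > 0` the unit-normal flow of the isoperimetric boundary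
`∂Ω_{V₀}` provides a smooth comparison function `J = I_{V₀}` touching `I` from above at
`V₀` and satisfying `J''(V)·J(V)² ≤ −∫_{Σ(V)}(Ric(n,n)+|A|²) =: −Φ(V)`, where `Φ ≥ 0`
since `Ric ≥ 0`. -/
theorem isoperimetric_profile_concave
    (I : ℝ → ℝ) (hIpos : ∀ V ∈ Set.Ioi (0:ℝ), 0 < I V)
    (hIcont : ContinuousOn I (Set.Ioi 0))
    (hcomp : ∀ V₀ ∈ Set.Ioi (0:ℝ), ∃ ε : ℝ, 0 < ε ∧
      Set.Ioo (V₀ - ε) (V₀ + ε) ⊆ Set.Ioi 0 ∧ ∃ J Φ : ℝ → ℝ,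
        ContDiffOn ℝ 2 J (Set.Ioo (V₀ - ε) (V₀ + ε)) ∧
        J V₀ = I V₀ ∧
        (∀ V ∈ Set.Ioo (V₀ - ε) (V₀ + ε), I V ≤ J V) ∧
        (∀ V ∈ Set.Ioo (V₀ - ε) (V₀ + ε), 0 ≤ Φ V) ∧
        (∀ V ∈ Set.Ioo (V₀ - ε) (V₀ + ε),
          deriv (deriv J) V * (J V)^2 ≤ -Φ V)) :
    ConcaveOn ℝ (Set.Ioi 0) I := by
  have key : ∀ p q : ℝ, p ∈ Set.Ioi (0:ℝ) → q ∈ Set.Ioi (0:ℝ) → p < q →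
      ∀ s t : ℝ, 0 ≤ s → 0 ≤ t → s + t = 1 → s * I p + t * I q ≤ I (s * p + t * q) := by
    intro p q hp hq hpq s t hs ht hst
    have hp0 : (0:ℝ) < p := hp
    have hIccsub : Icc p q ⊆ Set.Ioi (0:ℝ) := fun u hu => lt_of_lt_of_le hp0 hu.1
    have hbar : ∀ x₀ ∈ Ioo p q, ∃ ε : ℝ, 0 < ε ∧ ∃ J : ℝ → ℝ,
        ContDiffOn ℝ 2 J (Ioo (x₀ - ε) (x₀ + ε)) ∧ J x₀ = I x₀ ∧
        (∀ V ∈ Ioo (x₀ - ε) (x₀ + ε), I V ≤ J V) ∧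
        (∀ V ∈ Ioo (x₀ - ε) (x₀ + ε), deriv (deriv J) V ≤ 0) := by
      intro x₀ hx₀
      have hx₀pos : x₀ ∈ Set.Ioi (0:ℝ) := lt_trans hp0 hx₀.1
      obtain ⟨ε, hε, hsub, J, Φ, hJc, hJeq, hJge, hΦ, hineq⟩ := hcomp x₀ hx₀pos
      refine ⟨ε, hε, J, hJc, hJeq, hJge, ?_⟩
      intro V hV
      have hJV : 0 < J V := lt_of_lt_of_le (hIpos V (hsub hV)) (hJge V hV)
      have h1 := hineq V hV
      have h2 := hΦ V hV
      by_contra hpos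
      push_neg at hpos
      nlinarith [mul_pos hpos (pow_pos hJV 2)]
    have hz : s * p + t * q ∈ Icc p q := by
      constructor
      · nlinarith
      · nlinarith
    have hchord := chord_le_of_barriers I hpq (hIcont.mono hIccsub) hbar (s * p + t * q) hz
    have hyx : q - p ≠ 0 := sub_ne_zero.2 hpq.ne'
    have hid : (I q - I p) / (q - p) * ((s * p + t * q) - p) = t * (I q - I p) := by
      have hzp : (s * p + t * q) - p = t * (q - p) := by nlinarith
      rw [hzp]
      field_simp
    have hs1 : s = 1 - t := by linarith
    rw [hid] at hchord
    have hlin : s * I p + t * I q = I p + t * (I q - I p) := by rw [hs1]; ring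
    linarith
  refine ⟨convex_Ioi 0, ?_⟩
  intro v hv w hw ta tb hta htb hab
  simp only [smul_eq_mul]
  rcases lt_trichotomy v w with h | h | h
  · exact key v w hv hw h ta tb hta htb hab
  · subst h
    have h1 : ta * v + tb * v = v := by rw [← add_mul, hab, one_mul]
    have h2 : ta * I v + tb * I v = I v := by rw [← add_mul, hab, one_mul]
    rw [h1, h2]
  · have hk := key w v hw hv h tb ta htb hta (by linarith)
    have h1 : tb * w + ta * v = ta * v + tb * w := by ring
    rw [h1] at hk
    linarith
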